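/- Assume ‖Δ_i H_ν‖_{L²_μ} ≤ (1 + Kν)^θ for all i, ν ∈ ℕ₀ with constants K ≥ 1, θ ≥ 0 (univariate case). Then for every finitely supported multi-index ν, c_ν := sup over finite Λ of ‖(I − U_Λ)H_ν‖_{L²_μ} satisfies c_ν ≤ ∏_{m∈ℕ} (1 + K ν_m)^{θ+1}. -/

import Mathlib

open scoped BigOperators
open MeasureTheory ProbabilityTheory
open scoped ENNReal NNReal

/-- Univariate orthonormal Hermite polynomial of degree `n` (as a function),
w.r.t. the standard Gaussian measure: `H_n(t) = He_n(t)/√(n!)`. -/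
noncomputable def hermiteFun (n : ℕ) (t : ℝ) : ℝ :=
  Polynomial.aeval t (Polynomial.hermite n) / Real.sqrt (Nat.factorial n)

/-- Tensorized Hermite polynomial `H_ν = ∏_m H_{ν_m}` for a finitely supported
multi-index `ν`. -/
noncomputable def hermiteProd (ν : ℕ →₀ ℕ) (ξ : ℕ → ℝ) : ℝ :=
  ∏ m ∈ ν.support, hermiteFun (ν m) (ξ m)

/-- Tensor-product Lagrange interpolation operator `U_k = ⊗_m U_{k_m}` based on
univariate nodes `x k 0, …, x k k` at level `k`, applied to `f` and evaluated at `ξ`. -/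
noncomputable def tensorU (x : ℕ → ℕ → ℝ) {E : Type*} [AddCommGroup E] [Module ℝ E]
    (k : ℕ →₀ ℕ) (f : (ℕ → ℝ) → E) (ξ : ℕ → ℝ) : E :=
  ∑ j ∈ Finset.Iic k,
    (∏ m ∈ k.support,
      (Lagrange.basis (Finset.range (k m + 1)) (x (k m)) (j m)).eval (ξ m)) •
      f (fun m => x (k m) (j m))

/-- Tensorized detail operator `Δ_i = ⊗_m (U_{i_m} − U_{i_m−1})` (with `U_{−1}=0`),
expanded as a signed sum of tensor-product interpolation operators. -/
noncomputable def tensorDeltaF (x : ℕ → ℕ → ℝ) {E : Type*} [AddCommGroup E] [Module ℝ E]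
    (i : ℕ →₀ ℕ) (f : (ℕ → ℝ) → E) (ξ : ℕ → ℝ) : E :=
  ∑ k ∈ Finset.Iic i,
    if ∀ m ∈ i.support, i m - 1 ≤ k m then
      ((-1 : ℝ) ^ (∑ m ∈ i.support, (i m - k m))) • tensorU x k f ξ
    else 0

/-- The `L²_μ` norm of a scalar function. -/
noncomputable def l2norm (μ : Measure (ℕ → ℝ)) (g : (ℕ → ℝ) → ℝ) : ℝ :=
  Real.sqrt (∫ ξ, (g ξ) ^ 2 ∂μ)

/-- Univariate Lagrange interpolation operator at nodes `x k 0, …, x k k`. -/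
noncomputable def uniU (x : ℕ → ℕ → ℝ) (k : ℕ) (f : ℝ → ℝ) (t : ℝ) : ℝ :=
  ∑ j ∈ Finset.range (k + 1),
    (Lagrange.basis (Finset.range (k + 1)) (x k) j).eval t * f (x k j)

/-- Univariate detail operator `Δ_k = U_k − U_{k−1}` (with `U_{−1} = 0`). -/
noncomputable def uniDelta (x : ℕ → ℕ → ℝ) : ℕ → (ℝ → ℝ) → ℝ → ℝ
  | 0 => uniU x 0
  | (k + 1) => fun f t => uniU x (k + 1) f t - uniU x k f t

noncomputable def hPoly (n : ℕ) : Polynomial ℝ :=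
  Polynomial.C (Real.sqrt (Nat.factorial n))⁻¹ *
    (Polynomial.hermite n).map (Int.castRingHom ℝ)

lemma hermiteFun_eq_eval (n : ℕ) (t : ℝ) : hermiteFun n t = (hPoly n).eval t := by
  simp [hermiteFun, hPoly, div_eq_mul_inv, mul_comm, Polynomial.aeval_def,
    Polynomial.eval₂_eq_eval_map]

lemma hPoly_degree_le (n : ℕ) : (hPoly n).degree ≤ n := by
  refine le_trans (Polynomial.degree_mul_le _ _) ?_
  calc (Polynomial.C (Real.sqrt (Nat.factorial n))⁻¹).degree
        + ((Polynomial.hermite n).map (Int.castRingHom ℝ)).degree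
      ≤ 0 + (Polynomial.hermite n).degree :=
        add_le_add Polynomial.degree_C_le Polynomial.degree_map_le
    _ ≤ n := by simp [Polynomial.degree_hermite]

lemma hermiteFun_zero (t : ℝ) : hermiteFun 0 t = 1 := by
  simp [hermiteFun, Polynomial.hermite]

lemma injOn_range (x : ℕ → ℕ → ℝ) (hx : ∀ k : ℕ, Set.InjOn (x k) (Set.Iic k)) (k : ℕ) :
    Set.InjOn (x k) ↑(Finset.range (k + 1)) := by
  intro a ha b hb hab
  simp only [Finset.coe_range, Set.mem_Iio] at ha hb
  exact hx k (Nat.lt_succ_iff.mp ha) (Nat.lt_succ_iff.mp hb) hab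

lemma uniU_eval (x : ℕ → ℕ → ℝ) (k : ℕ) (f : ℝ → ℝ) (t : ℝ) :
    uniU x k f t
      = (Lagrange.interpolate (Finset.range (k + 1)) (x k) (fun j => f (x k j))).eval t := by
  simp [uniU, Lagrange.interpolate_apply, Polynomial.eval_finset_sum, mul_comm]

lemma uniU_poly (x : ℕ → ℕ → ℝ) (hx : ∀ k : ℕ, Set.InjOn (x k) (Set.Iic k)) (k : ℕ)
    (p : Polynomial ℝ) (hdeg : p.degree < (k + 1 : ℕ)) (t : ℝ) :
    uniU x k (fun s => p.eval s) t = p.eval t := by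
  rw [uniU_eval]
  have hcard : p.degree < (Finset.range (k + 1)).card := by simpa using hdeg
  rw [← Lagrange.eq_interpolate (injOn_range x hx k) hcard]

lemma uniU_hermite_exact (x : ℕ → ℕ → ℝ) (hx : ∀ k : ℕ, Set.InjOn (x k) (Set.Iic k))
    {n k : ℕ} (h : n ≤ k) (t : ℝ) :
    uniU x k (hermiteFun n) t = hermiteFun n t := by
  have : uniU x k (hermiteFun n) t = uniU x k (fun s => (hPoly n).eval s) t := by
    simp only [uniU]
    refine Finset.sum_congr rfl fun j _ => by rw [hermiteFun_eq_eval]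
  rw [this, uniU_poly x hx k _ (lt_of_le_of_lt (hPoly_degree_le n) ?_) t,
    hermiteFun_eq_eval]
  exact_mod_cast Nat.cast_lt.mpr (Nat.lt_succ_of_le h)

lemma uniDelta_eq_zero (x : ℕ → ℕ → ℝ) (hx : ∀ k : ℕ, Set.InjOn (x k) (Set.Iic k))
    {n k : ℕ} (h : n < k) (t : ℝ) :
    uniDelta x k (hermiteFun n) t = 0 := by
  cases k with
  | zero => omega
  | succ j =>
      have h1 : n ≤ j := Nat.lt_succ_iff.mp h
      simp [uniDelta, uniU_hermite_exact x hx (le_trans h1 (Nat.le_succ j)),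
        uniU_hermite_exact x hx h1]

lemma uniDelta_sum (x : ℕ → ℕ → ℝ) (f : ℝ → ℝ) (t : ℝ) (N : ℕ) :
    ∑ k ∈ Finset.range (N + 1), uniDelta x k f t = uniU x N f t := by
  induction N with
  | zero => simp [uniDelta]
  | succ N ih => rw [Finset.sum_range_succ, ih]; simp [uniDelta]

lemma uniDelta_as_sum (x : ℕ → ℕ → ℝ) (f : ℝ → ℝ) (t : ℝ) (n : ℕ) :
    uniDelta x n f t = ∑ k ∈ Finset.Icc (n - 1) n, (-1 : ℝ) ^ (n - k) * uniU x k f t := by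
  cases n with
  | zero => simp [uniDelta]
  | succ n =>
      have h : Finset.Icc n (n + 1) = {n, n + 1} := by
        ext a; simp [Finset.mem_Icc]; omega
      simp only [uniDelta, Nat.succ_sub_one, h]
      rw [Finset.sum_insert (by simp)]
      rw [Finset.sum_singleton]
      simp only [Nat.sub_self, pow_zero, Nat.succ_sub (Nat.le_succ n)]
      ring_nf
      rw [Nat.add_sub_cancel]
      ring

lemma Nat_Iic_eq_range (n : ℕ) : Finset.Iic n = Finset.range (n + 1) := by
  ext a; simp [Nat.lt_succ_iff]

lemma Iic_finsupp_eq (k : ℕ →₀ ℕ) (S : Finset ℕ) (h : k.support ⊆ S) :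
    Finset.Iic k = S.finsupp (fun m => Finset.Iic (k m)) := by
  ext f
  rw [Finset.mem_Iic, Finset.mem_finsupp_iff]
  constructor
  · intro hf
    exact ⟨subset_trans (Finsupp.support_mono hf) h,
      fun m _ => Finset.mem_Iic.mpr (Finsupp.le_def.mp hf m)⟩
  · rintro ⟨hsupp, hmem⟩
    rw [Finsupp.le_def]
    intro m
    by_cases hm : m ∈ S
    · exact Finset.mem_Iic.mp (hmem m hm)
    · have : f m = 0 := Finsupp.notMem_support_iff.mp (fun hs => hm (hsupp hs))
      simp [this]

lemma sum_finsupp_prod (S : Finset ℕ) (t : ℕ → Finset ℕ) (g : ℕ → ℕ → ℝ) :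
    ∑ f ∈ S.finsupp t, ∏ m ∈ S, g m (f m) = ∏ m ∈ S, ∑ a ∈ t m, g m a := by
  rw [Finset.prod_sum]
  refine Finset.sum_nbij' (fun f => fun m _ => f m) (fun p => Finsupp.indicator S p)
    ?_ ?_ ?_ ?_ ?_
  · intro f hf
    rw [Finset.mem_finsupp_iff] at hf
    exact Finset.mem_pi.mpr fun m hm => hf.2 m hm
  · intro p hp
    rw [Finset.mem_finsupp_iff]
    refine ⟨Finsupp.support_indicator_subset S _, fun m hm => ?_⟩
    rw [Finsupp.indicator_of_mem hm]
    exact Finset.mem_pi.mp hp m hm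
  · intro f hf
    rw [Finset.mem_finsupp_iff] at hf
    ext m
    by_cases hm : m ∈ S
    · rw [Finsupp.indicator_of_mem hm]
    · rw [Finsupp.indicator_of_notMem hm]
      exact (Finsupp.notMem_support_iff.mp (fun hs => hm (hf.1 hs))).symm
  · intro p hp
    funext m hm
    rw [Finsupp.indicator_of_mem hm]
  · intro f hf
    rw [← Finset.prod_attach S (fun m => g m (f m))]

lemma tensorU_eq_prod (x : ℕ → ℕ → ℝ) (k ν : ℕ →₀ ℕ) (S : Finset ℕ)
    (hk : k.support ⊆ S) (hν : ν.support ⊆ S) (ξ : ℕ → ℝ) :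
    tensorU x k (hermiteProd ν) ξ
      = ∏ m ∈ S, uniU x (k m) (hermiteFun (ν m)) (ξ m) := by
  simp only [tensorU, hermiteProd]
  rw [Iic_finsupp_eq k S hk]
  have step1 : ∀ f ∈ S.finsupp (fun m => Finset.Iic (k m)),
      (∏ m ∈ k.support, (Lagrange.basis (Finset.range (k m + 1)) (x (k m)) (f m)).eval (ξ m)) •
        (∏ m ∈ ν.support, hermiteFun (ν m) (x (k m) (f m)))
      = ∏ m ∈ S, ((Lagrange.basis (Finset.range (k m + 1)) (x (k m)) (f m)).eval (ξ m)
          * hermiteFun (ν m) (x (k m) (f m))) := by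
    intro f hf
    rw [Finset.mem_finsupp_iff] at hf
    rw [smul_eq_mul, Finset.prod_mul_distrib]
    congr 1
    · refine Finset.prod_subset hk ?_
      intro m hmS hmk
      have hk0 : k m = 0 := Finsupp.notMem_support_iff.mp hmk
      have hf0 : f m = 0 := by
        have := Finset.mem_Iic.mp (hf.2 m hmS); omega
      rw [hk0, hf0]
      simp [Finset.range_one, Lagrange.basis_singleton]
    · refine Finset.prod_subset hν ?_
      intro m hmS hmν
      rw [Finsupp.notMem_support_iff.mp hmν, hermiteFun_zero]
  refine (Finset.sum_congr rfl step1).trans ?_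
  refine (sum_finsupp_prod S (fun m => Finset.Iic (k m))
    (fun m a => (Lagrange.basis (Finset.range (k m + 1)) (x (k m)) a).eval (ξ m)
      * hermiteFun (ν m) (x (k m) a))).trans ?_
  refine Finset.prod_congr rfl fun m hm => ?_
  rw [uniU, Nat_Iic_eq_range]

lemma filter_Iic_eq (i : ℕ →₀ ℕ) (S : Finset ℕ) (h : i.support ⊆ S) :
    (Finset.Iic i).filter (fun k => ∀ m ∈ i.support, i m - 1 ≤ k m)
      = S.finsupp (fun m => Finset.Icc (i m - 1) (i m)) := by
  ext f
  simp only [Finset.mem_filter, Finset.mem_Iic, Finset.mem_finsupp_iff, Finset.mem_Icc,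
    Finsupp.le_def]
  constructor
  · rintro ⟨h1, h2⟩
    refine ⟨subset_trans (Finsupp.support_mono ?_) h, fun m hmS => ?_⟩
    · exact Finsupp.le_def.mpr h1
    constructor
    · by_cases hm : m ∈ i.support
      · exact h2 m hm
      · have : i m = 0 := Finsupp.notMem_support_iff.mp hm
        omega
    · exact h1 m
  · rintro ⟨hs, hv⟩
    constructor
    · intro m
      by_cases hm : m ∈ S
      · exact (hv m hm).2
      · have : f m = 0 := Finsupp.notMem_support_iff.mp (fun hsup => hm (hs hsup))
        simp [this]
    · intro m hm
      exact (hv m (h hm)).1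

lemma tensorDelta_eq_prod (x : ℕ → ℕ → ℝ) (i ν : ℕ →₀ ℕ) (S : Finset ℕ)
    (hi : i.support ⊆ S) (hν : ν.support ⊆ S) (ξ : ℕ → ℝ) :
    tensorDeltaF x i (hermiteProd ν) ξ
      = ∏ m ∈ S, uniDelta x (i m) (hermiteFun (ν m)) (ξ m) := by
  simp only [tensorDeltaF]
  rw [← Finset.sum_filter, filter_Iic_eq i S hi]
  have step : ∀ f ∈ S.finsupp (fun m => Finset.Icc (i m - 1) (i m)),
      ((-1 : ℝ) ^ (∑ m ∈ i.support, (i m - f m))) • tensorU x f (hermiteProd ν) ξ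
        = ∏ m ∈ S, ((-1 : ℝ) ^ (i m - f m) * uniU x (f m) (hermiteFun (ν m)) (ξ m)) := by
    intro f hf
    rw [Finset.mem_finsupp_iff] at hf
    rw [smul_eq_mul, tensorU_eq_prod x f ν S hf.1 hν, Finset.prod_mul_distrib]
    congr 1
    rw [← Finset.prod_pow_eq_pow_sum]
    refine Finset.prod_subset hi ?_
    intro m hmS hmi
    have hi0 : i m = 0 := Finsupp.notMem_support_iff.mp hmi
    have hf0 : f m = 0 := by
      have := Finset.mem_Icc.mp (hf.2 m hmS); omega
    simp [hi0, hf0]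
  refine (Finset.sum_congr rfl step).trans ?_
  refine (sum_finsupp_prod S (fun m => Finset.Icc (i m - 1) (i m))
    (fun m a => (-1 : ℝ) ^ (i m - a) * uniU x a (hermiteFun (ν m)) (ξ m))).trans ?_
  exact Finset.prod_congr rfl fun m _ => (uniDelta_as_sum x _ _ (i m)).symm

lemma hermiteProd_eq_sum (x : ℕ → ℕ → ℝ) (hx : ∀ k : ℕ, Set.InjOn (x k) (Set.Iic k))
    (ν : ℕ →₀ ℕ) (ξ : ℕ → ℝ) :
    hermiteProd ν ξ
      = ∑ i ∈ Finset.Iic ν, ∏ m ∈ ν.support, uniDelta x (i m) (hermiteFun (ν m)) (ξ m) := by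
  refine Eq.symm ?_
  refine (Finset.sum_congr (Iic_finsupp_eq ν ν.support subset_rfl)
    (fun _ _ => rfl)).trans ?_
  refine (sum_finsupp_prod ν.support (fun m => Finset.Iic (ν m))
    (fun m a => uniDelta x a (hermiteFun (ν m)) (ξ m))).trans ?_
  unfold hermiteProd
  refine Finset.prod_congr rfl fun m hm => ?_
  rw [Nat_Iic_eq_range, uniDelta_sum, uniU_hermite_exact x hx (le_refl _)]

lemma tensorDelta_eq_zero (x : ℕ → ℕ → ℝ) (hx : ∀ k : ℕ, Set.InjOn (x k) (Set.Iic k))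
    (i ν : ℕ →₀ ℕ) (hnot : ¬ i ≤ ν) (ξ : ℕ → ℝ) :
    tensorDeltaF x i (hermiteProd ν) ξ = 0 := by
  rw [tensorDelta_eq_prod x i ν (i.support ∪ ν.support) Finset.subset_union_left
    Finset.subset_union_right ξ]
  obtain ⟨m, hm⟩ : ∃ m, ν m < i m := by
    by_contra hc
    push_neg at hc
    exact hnot (Finsupp.le_def.mpr hc)
  refine Finset.prod_eq_zero (Finset.mem_union_left _ ?_) (uniDelta_eq_zero x hx hm (ξ m))
  exact Finsupp.mem_support_iff.mpr (by omega)

lemma error_eq (x : ℕ → ℕ → ℝ) (hx : ∀ k : ℕ, Set.InjOn (x k) (Set.Iic k))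
    (ν : ℕ →₀ ℕ) (Λ : Finset (ℕ →₀ ℕ)) (ξ : ℕ → ℝ) :
    hermiteProd ν ξ - ∑ i ∈ Λ, tensorDeltaF x i (hermiteProd ν) ξ
      = ∑ i ∈ Finset.Iic ν \ Λ,
          ∏ m ∈ ν.support, uniDelta x (i m) (hermiteFun (ν m)) (ξ m) := by
  classical
  have hΛ : ∑ i ∈ Λ, tensorDeltaF x i (hermiteProd ν) ξ
      = ∑ i ∈ Λ ∩ Finset.Iic ν,
          ∏ m ∈ ν.support, uniDelta x (i m) (hermiteFun (ν m)) (ξ m) := by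
    rw [← Finset.sum_inter_add_sum_sdiff Λ (Finset.Iic ν)]
    have h2 : ∑ i ∈ Λ \ Finset.Iic ν, tensorDeltaF x i (hermiteProd ν) ξ = 0 := by
      refine Finset.sum_eq_zero fun i hi => ?_
      have := Finset.mem_sdiff.mp hi
      exact tensorDelta_eq_zero x hx i ν (fun hle => this.2 (Finset.mem_Iic.mpr hle)) ξ
    rw [h2, add_zero]
    refine Finset.sum_congr rfl fun i hi => ?_
    have hiν : i ≤ ν := Finset.mem_Iic.mp (Finset.mem_inter.mp hi).2
    exact tensorDelta_eq_prod x i ν ν.support (Finsupp.support_mono hiν) subset_rfl ξ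
  rw [hΛ, hermiteProd_eq_sum x hx ν ξ]
  rw [← Finset.sum_sdiff_eq_sub]
  · rw [Finset.inter_comm, Finset.sdiff_inter_self_left]
  · exact Finset.inter_subset_right


lemma uniU_is_poly (x : ℕ → ℕ → ℝ) (k : ℕ) (f : ℝ → ℝ) :
    ∃ p : Polynomial ℝ, ∀ t, uniU x k f t = p.eval t :=
  ⟨_, fun t => uniU_eval x k f t⟩

lemma uniDelta_is_poly (x : ℕ → ℕ → ℝ) (i n : ℕ) :
    ∃ p : Polynomial ℝ, ∀ t, uniDelta x i (hermiteFun n) t = p.eval t := by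
  cases i with
  | zero => exact uniU_is_poly x 0 _
  | succ j =>
      obtain ⟨p, hp⟩ := uniU_is_poly x (j + 1) (hermiteFun n)
      obtain ⟨q, hq⟩ := uniU_is_poly x j (hermiteFun n)
      exact ⟨p - q, fun t => by simp [uniDelta, hp t, hq t]⟩

-- ## Gaussian integrability of polynomials

lemma abs_pow_le_factorial_mul_exp (t : ℝ) (n : ℕ) :
    |t| ^ n ≤ (n.factorial : ℝ) * Real.exp |t| := by
  have h1 : |t| ^ n / (n.factorial : ℝ) ≤ Real.exp |t| := by
    calc |t| ^ n / (n.factorial : ℝ)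
        ≤ ∑ i ∈ Finset.range (n + 1), |t| ^ i / (i.factorial : ℝ) := by
          refine Finset.single_le_sum (f := fun i => |t| ^ i / (i.factorial : ℝ))
            (fun i _ => by positivity) (Finset.self_mem_range_succ n)
      _ ≤ Real.exp |t| := Real.sum_le_exp_of_nonneg (abs_nonneg t) (n + 1)
  have hpos : (0 : ℝ) < n.factorial := by positivity
  calc |t| ^ n = (n.factorial : ℝ) * (|t| ^ n / n.factorial) := by field_simp
    _ ≤ (n.factorial : ℝ) * Real.exp |t| := by
        exact mul_le_mul_of_nonneg_left h1 (le_of_lt hpos)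

lemma integrable_pow_gaussian (n : ℕ) :
    Integrable (fun t : ℝ => t ^ n) (gaussianReal 0 1) := by
  rw [gaussianReal_of_var_ne_zero 0 one_ne_zero]
  rw [integrable_withDensity_iff (measurable_gaussianPDF 0 1)
    (Filter.Eventually.of_forall fun t => ENNReal.ofReal_lt_top)]
  have hpdf : ∀ t : ℝ, (gaussianPDF 0 1 t).toReal = gaussianPDFReal 0 1 t := fun t =>
    ENNReal.toReal_ofReal (gaussianPDFReal_nonneg 0 1 t)
  set c : ℝ := (Real.sqrt (2 * Real.pi))⁻¹ with hcdef
  have hc : (0:ℝ) < c := by rw [hcdef]; positivity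
  have hmeas : AEStronglyMeasurable (fun t : ℝ => t ^ n * (gaussianPDF 0 1 t).toReal) volume := by
    refine (Continuous.measurable (by continuity)).aestronglyMeasurable.mul ?_
    exact (measurable_gaussianPDF 0 1).ennreal_toReal.aestronglyMeasurable
  refine Integrable.mono'
    (g := fun t : ℝ => (c * n.factorial * Real.exp 1) * Real.exp (-(1/4) * t ^ 2))
    (((integrable_exp_neg_mul_sq (by norm_num : (0:ℝ) < 1/4)).const_mul _)) hmeas ?_
  refine Filter.Eventually.of_forall fun t => ?_
  rw [norm_mul, Real.norm_eq_abs, Real.norm_eq_abs, hpdf, abs_pow]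
  have hpdfval : gaussianPDFReal 0 1 t = c * Real.exp (-(t ^ 2) / 2) := by
    simp [gaussianPDFReal, hcdef]
  rw [hpdfval, abs_of_pos (by positivity : (0:ℝ) < c * Real.exp (-(t^2)/2))]
  have hb : |t| ^ n * (c * Real.exp (-(t ^ 2) / 2))
      ≤ ((n.factorial : ℝ) * Real.exp |t|) * (c * Real.exp (-(t ^ 2) / 2)) := by
    refine mul_le_mul_of_nonneg_right (abs_pow_le_factorial_mul_exp t n) (by positivity)
  refine le_trans hb ?_
  have hexp : Real.exp |t| * Real.exp (-(t ^ 2) / 2) ≤ Real.exp 1 * Real.exp (-(1/4) * t ^ 2) := by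
    rw [← Real.exp_add, ← Real.exp_add]
    refine Real.exp_le_exp.mpr ?_
    have hsq : 0 ≤ (1 - |t| / 2) ^ 2 := sq_nonneg _
    have habs : |t| ^ 2 = t ^ 2 := sq_abs t
    nlinarith [sq_abs t, sq_nonneg (1 - |t|/2)]
  calc (n.factorial : ℝ) * Real.exp |t| * (c * Real.exp (-(t ^ 2) / 2))
      = (c * n.factorial) * (Real.exp |t| * Real.exp (-(t ^ 2) / 2)) := by ring
    _ ≤ (c * n.factorial) * (Real.exp 1 * Real.exp (-(1/4) * t ^ 2)) := by
        refine mul_le_mul_of_nonneg_left hexp (by positivity)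
    _ = (c * n.factorial * Real.exp 1) * Real.exp (-(1/4) * t ^ 2) := by ring

lemma integrable_polyeval_gaussian (p : Polynomial ℝ) :
    Integrable (fun t => p.eval t) (gaussianReal 0 1) := by
  induction p using Polynomial.induction_on' with
  | add p q hp hq => simp only [Polynomial.eval_add]; exact hp.add hq
  | monomial n a =>
      simpa [Polynomial.eval_monomial] using (integrable_pow_gaussian n).const_mul a

-- ## Gaussian product-measure lemmas

lemma integrable_pi_prod {n : ℕ} (f : Fin n → ℝ → ℝ)
    (hf : ∀ j, Integrable (f j) (gaussianReal 0 1)) :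
    Integrable (fun y : Fin n → ℝ => ∏ j, f j (y j))
      (Measure.pi fun _ => gaussianReal 0 1) := by
  letI : MeasureSpace ℝ := ⟨gaussianReal 0 1⟩
  haveI : SigmaFinite (volume : Measure ℝ) :=
    inferInstanceAs (SigmaFinite (gaussianReal 0 1))
  exact MeasureTheory.Integrable.fintype_prod (f := f) hf

lemma integral_pi_prod {n : ℕ} (f : Fin n → ℝ → ℝ) :
    ∫ y : Fin n → ℝ, ∏ j, f j (y j) ∂(Measure.pi fun _ => gaussianReal 0 1)
      = ∏ j, ∫ t, f j t ∂(gaussianReal 0 1) := by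
  letI : MeasureSpace ℝ := ⟨gaussianReal 0 1⟩
  haveI : SigmaFinite (volume : Measure ℝ) :=
    inferInstanceAs (SigmaFinite (gaussianReal 0 1))
  exact MeasureTheory.integral_fin_nat_prod_eq_prod f

-- ## sqrt of products

lemma sqrt_prod {I : Type*} {s : Finset I} (f : I → ℝ) (h : ∀ i ∈ s, 0 ≤ f i) :
    Real.sqrt (∏ i ∈ s, f i) = ∏ i ∈ s, Real.sqrt (f i) := by
  induction s using Finset.cons_induction with
  | empty => simp
  | cons a s ha ih =>
      rw [Finset.prod_cons, Finset.prod_cons,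
        Real.sqrt_mul (h a (Finset.mem_cons_self a s)),
        ih (fun i hi => h i (Finset.mem_cons.mpr (Or.inr hi)))]

lemma l2norm_eq_eLpNorm {μ : Measure (ℕ → ℝ)} {f : (ℕ → ℝ) → ℝ} (hf : MemLp f 2 μ) :
    l2norm μ f = (eLpNorm f 2 μ).toReal := by
  rw [hf.eLpNorm_eq_integral_rpow_norm two_ne_zero ENNReal.ofNat_ne_top]
  have hnn : 0 ≤ ∫ a, ‖f a‖ ^ (2 : ℝ≥0∞).toReal ∂μ :=
    integral_nonneg fun a => Real.rpow_nonneg (norm_nonneg _) _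
  rw [ENNReal.toReal_ofReal (Real.rpow_nonneg hnn _)]
  have h2 : (2 : ℝ≥0∞).toReal = (2 : ℝ) := by simp
  rw [h2, l2norm, Real.sqrt_eq_rpow]
  have hintg : ∀ a : ℕ → ℝ, ‖f a‖ ^ (2 : ℝ) = f a ^ 2 := fun a => by
    rw [show (2 : ℝ) = ((2 : ℕ) : ℝ) by norm_num, Real.rpow_natCast, Real.norm_eq_abs, sq_abs]
  rw [show (∫ a, ‖f a‖ ^ (2:ℝ) ∂μ) = ∫ a, f a ^ 2 ∂μ from integral_congr_ae
    (Filter.Eventually.of_forall fun a => hintg a)]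
  norm_num

lemma l2norm_sum_le {μ : Measure (ℕ → ℝ)} {I : Type*} (T : Finset I) (f : I → (ℕ → ℝ) → ℝ)
    (hf : ∀ i ∈ T, MemLp (f i) 2 μ) :
    l2norm μ (fun ξ => ∑ i ∈ T, f i ξ) ≤ ∑ i ∈ T, l2norm μ (f i) := by
  classical
  have hfun : (∑ i ∈ T, f i) = fun ξ => ∑ i ∈ T, f i ξ := by
    funext ξ; simp
  have hsum : MemLp (fun ξ => ∑ i ∈ T, f i ξ) 2 μ := by
    rw [← hfun]; exact memLp_finset_sum' T hf
  rw [l2norm_eq_eLpNorm hsum]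
  have h1 : eLpNorm (fun ξ => ∑ i ∈ T, f i ξ) 2 μ ≤ ∑ i ∈ T, eLpNorm (f i) 2 μ := by
    rw [← hfun]
    exact eLpNorm_sum_le (fun i hi => (hf i hi).aestronglyMeasurable)
      (by norm_num : (1 : ℝ≥0∞) ≤ 2)
  calc (eLpNorm (fun ξ => ∑ i ∈ T, f i ξ) 2 μ).toReal
      ≤ (∑ i ∈ T, eLpNorm (f i) 2 μ).toReal := by
        refine ENNReal.toReal_mono ?_ h1
        exact (ENNReal.sum_lt_top.mpr fun i hi => (hf i hi).eLpNorm_lt_top).ne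
    _ = ∑ i ∈ T, (eLpNorm (f i) 2 μ).toReal :=
        ENNReal.toReal_sum fun i hi => (hf i hi).eLpNorm_ne_top
    _ = ∑ i ∈ T, l2norm μ (f i) :=
        Finset.sum_congr rfl fun i hi => (l2norm_eq_eLpNorm (hf i hi)).symm

lemma l2norm_prod_eval (μ : Measure (ℕ → ℝ)) [IsProbabilityMeasure μ]
    (hμ : ∀ n : ℕ, μ.map (fun ξ (j : Fin n) => ξ (j : ℕ)) =
      Measure.pi fun _ : Fin n => gaussianReal 0 1)
    (n : ℕ) (g : ℕ → ℝ → ℝ) (hg : ∀ m, ∃ p : Polynomial ℝ, ∀ t, g m t = p.eval t) :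
    MemLp (fun ξ => ∏ m ∈ Finset.range n, g m (ξ m)) 2 μ ∧
    l2norm μ (fun ξ => ∏ m ∈ Finset.range n, g m (ξ m))
      = ∏ m ∈ Finset.range n, Real.sqrt (∫ t, (g m t) ^ 2 ∂(gaussianReal 0 1)) := by
  have hgc : ∀ m, Continuous (g m) := fun m => by
    obtain ⟨p, hp⟩ := hg m
    rw [funext hp]
    exact p.continuous
  set proj : (ℕ → ℝ) → (Fin n → ℝ) := fun ξ j => ξ (j : ℕ) with hprojdef
  have hprojm : Measurable proj := measurable_pi_lambda _ fun j => measurable_pi_apply _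
  set G : (Fin n → ℝ) → ℝ := fun y => ∏ j : Fin n, g (j : ℕ) (y j) with hGdef
  have hGc : Continuous G := continuous_finset_prod _ fun j _ => (hgc j).comp (continuous_apply j)
  have hcomp : (fun ξ => ∏ m ∈ Finset.range n, g m (ξ m)) = fun ξ => G (proj ξ) := by
    funext ξ
    exact (Fin.prod_univ_eq_prod_range (fun m => g m (ξ m)) n).symm
  have hGsq : (fun y : Fin n → ℝ => G y ^ 2) = fun y => ∏ j : Fin n, (g (j : ℕ) (y j)) ^ 2 := by
    funext y
    rw [hGdef]
    exact (Finset.prod_pow _ _ _).symm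
  have hsqint : Integrable (fun y => G y ^ 2) (Measure.pi fun _ : Fin n => gaussianReal 0 1) := by
    rw [hGsq]
    refine integrable_pi_prod (fun j t => g (j : ℕ) t ^ 2) fun j => ?_
    obtain ⟨p, hp⟩ := hg (j : ℕ)
    have heq : (fun t => g (j : ℕ) t ^ 2) = fun t => (p ^ 2).eval t := by
      funext t; simp [hp t]
    show Integrable (fun t => g (j : ℕ) t ^ 2) (gaussianReal 0 1)
    rw [heq]
    exact integrable_polyeval_gaussian _
  have hmap := hμ n
  have hmeas : AEStronglyMeasurable (fun ξ => G (proj ξ)) μ :=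
    (hGc.measurable.comp hprojm).aestronglyMeasurable
  have hGsqm : AEStronglyMeasurable (fun y => G y ^ 2) (μ.map proj) :=
    ((hGc.pow 2).measurable).aestronglyMeasurable
  have hint2 : Integrable (fun ξ => G (proj ξ) ^ 2) μ := by
    have h := (integrable_map_measure hGsqm hprojm.aemeasurable).mp (by rw [hmap]; exact hsqint)
    exact h
  have hmem : MemLp (fun ξ => G (proj ξ)) 2 μ := (memLp_two_iff_integrable_sq hmeas).mpr hint2
  constructor
  · rw [hcomp]; exact hmem
  rw [hcomp, l2norm]
  have hintval : ∫ ξ, G (proj ξ) ^ 2 ∂μ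
      = ∏ j : Fin n, ∫ t, (g (j : ℕ) t) ^ 2 ∂(gaussianReal 0 1) := by
    have h1 : ∫ y, G y ^ 2 ∂(μ.map proj) = ∫ ξ, G (proj ξ) ^ 2 ∂μ :=
      integral_map hprojm.aemeasurable hGsqm
    rw [← h1, hmap, hGsq]
    exact integral_pi_prod (fun j t => g (j : ℕ) t ^ 2)
  rw [hintval, sqrt_prod _ (fun j _ => integral_nonneg fun t => sq_nonneg _)]
  exact Fin.prod_univ_eq_prod_range (fun m => Real.sqrt (∫ t, (g m t) ^ 2 ∂(gaussianReal 0 1))) n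

/-- If the univariate detail operators satisfy `‖Δ_i H_ν‖_{L²} ≤ (1 + Kν)^θ`
for all `i, ν ∈ ℕ₀`, then the worst-case sparse collocation error on the
tensorized Hermite polynomial `H_ν` satisfies
`c_ν = sup_Λ ‖(I − U_Λ)H_ν‖_{L²_μ} ≤ ∏_m (1 + K ν_m)^{θ+1}`. -/
theorem c_nu_le_prod_bound (x : ℕ → ℕ → ℝ)
    (hx : ∀ k : ℕ, Set.InjOn (x k) (Set.Iic k))
    (μ : Measure (ℕ → ℝ)) [IsProbabilityMeasure μ]
    (hμ : ∀ n : ℕ, μ.map (fun ξ (j : Fin n) => ξ (j : ℕ)) =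
      Measure.pi fun _ : Fin n => gaussianReal 0 1)
    (K θ : ℝ) (hK : 1 ≤ K) (hθ : 0 ≤ θ)
    (hbound : ∀ i n : ℕ,
      Real.sqrt (∫ t, (uniDelta x i (hermiteFun n) t) ^ 2 ∂(gaussianReal 0 1)) ≤
        (1 + K * (n : ℝ)) ^ θ)
    (ν : ℕ →₀ ℕ) :
    sSup {e : ℝ | ∃ Λ : Finset (ℕ →₀ ℕ),
        e = l2norm μ (fun ξ =>
          hermiteProd ν ξ - ∑ i ∈ Λ, tensorDeltaF x i (hermiteProd ν) ξ)} ≤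
      ∏ m ∈ ν.support, (1 + K * (ν m : ℝ)) ^ (θ + 1) := by
  classical
  have hBnn : (0:ℝ) ≤ ∏ m ∈ ν.support, (1 + K * (ν m : ℝ)) ^ (θ + 1) :=
    Finset.prod_nonneg fun m _ => Real.rpow_nonneg (by positivity) _
  refine Real.sSup_le ?_ hBnn
  rintro e ⟨Λ, rfl⟩
  set n := ν.support.sup id + 1 with hn
  have hsup : ν.support ⊆ Finset.range n := fun m hm =>
    Finset.mem_range.mpr (Nat.lt_succ_of_le (Finset.le_sup (f := id) hm))
  set T := Finset.Iic ν \ Λ with hT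
  set gg : (ℕ →₀ ℕ) → ℕ → ℝ → ℝ := fun i m =>
    if m ∈ ν.support then uniDelta x (i m) (hermiteFun (ν m)) else fun _ => (1:ℝ) with hgg
  have hgpoly : ∀ i m, ∃ p : Polynomial ℝ, ∀ t, gg i m t = p.eval t := by
    intro i m
    by_cases hm : m ∈ ν.support
    · simp only [hgg, if_pos hm]
      exact uniDelta_is_poly x (i m) (ν m)
    · refine ⟨1, fun t => ?_⟩
      simp only [hgg]
      rw [if_neg hm]
      simp
  have herr : (fun ξ => hermiteProd ν ξ - ∑ i ∈ Λ, tensorDeltaF x i (hermiteProd ν) ξ)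
      = fun ξ => ∑ i ∈ T, ∏ m ∈ Finset.range n, gg i m (ξ m) := by
    funext ξ
    rw [error_eq x hx ν Λ ξ]
    refine Finset.sum_congr rfl fun i _ => ?_
    calc ∏ m ∈ ν.support, uniDelta x (i m) (hermiteFun (ν m)) (ξ m)
        = ∏ m ∈ ν.support, gg i m (ξ m) :=
          Finset.prod_congr rfl fun m hm => by simp only [hgg, if_pos hm]
      _ = ∏ m ∈ Finset.range n, gg i m (ξ m) :=
          Finset.prod_subset hsup fun m _ hm => by simp only [hgg, if_neg hm]
  rw [herr]
  have hKey := fun i => l2norm_prod_eval μ hμ n (gg i) (hgpoly i)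
  refine le_trans (l2norm_sum_le T _ (fun i _ => (hKey i).1)) ?_
  have hCnn : (0:ℝ) ≤ ∏ m ∈ ν.support, (1 + K * (ν m : ℝ)) ^ θ :=
    Finset.prod_nonneg fun m _ => Real.rpow_nonneg (by positivity) _
  have hfac : ∀ i ∈ T, l2norm μ (fun ξ => ∏ m ∈ Finset.range n, gg i m (ξ m))
      ≤ ∏ m ∈ ν.support, (1 + K * (ν m : ℝ)) ^ θ := by
    intro i _
    rw [(hKey i).2]
    have h1 : ∏ m ∈ Finset.range n, Real.sqrt (∫ t, (gg i m t) ^ 2 ∂(gaussianReal 0 1))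
        = ∏ m ∈ ν.support, Real.sqrt (∫ t, (gg i m t) ^ 2 ∂(gaussianReal 0 1)) := by
      refine (Finset.prod_subset hsup fun m _ hm => ?_).symm
      simp only [hgg]
      rw [if_neg hm]
      simp
    rw [h1]
    refine Finset.prod_le_prod (fun m _ => Real.sqrt_nonneg _) fun m hm => ?_
    simp only [hgg, if_pos hm]
    exact hbound (i m) (ν m)
  refine le_trans (Finset.sum_le_sum hfac) ?_
  have hcard : (T.card : ℝ) ≤ ((Finset.Iic ν).card : ℝ) := by
    exact_mod_cast Finset.card_le_card (Finset.sdiff_subset)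
  calc ∑ _i ∈ T, ∏ m ∈ ν.support, (1 + K * (ν m : ℝ)) ^ θ
      = (T.card : ℝ) * ∏ m ∈ ν.support, (1 + K * (ν m : ℝ)) ^ θ := by
        rw [Finset.sum_const, nsmul_eq_mul]
    _ ≤ ((Finset.Iic ν).card : ℝ) * ∏ m ∈ ν.support, (1 + K * (ν m : ℝ)) ^ θ :=
        mul_le_mul_of_nonneg_right hcard hCnn
    _ = (∏ m ∈ ν.support, ((ν m : ℝ) + 1)) * ∏ m ∈ ν.support, (1 + K * (ν m : ℝ)) ^ θ := by
        rw [Finsupp.card_Iic]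
        push_cast [Nat.card_Iic]
        ring
    _ = ∏ m ∈ ν.support, (((ν m : ℝ) + 1) * (1 + K * (ν m : ℝ)) ^ θ) :=
        (Finset.prod_mul_distrib).symm
    _ ≤ ∏ m ∈ ν.support, (1 + K * (ν m : ℝ)) ^ (θ + 1) := by
        refine Finset.prod_le_prod (fun m _ => ?_) fun m _ => ?_
        · have : (0:ℝ) ≤ (ν m : ℝ) := Nat.cast_nonneg _
          positivity
        · have hpos : (0:ℝ) < 1 + K * (ν m : ℝ) := by positivity
          rw [Real.rpow_add hpos, Real.rpow_one]
          have h2 : ((ν m : ℝ) + 1) ≤ 1 + K * (ν m : ℝ) := by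
            nlinarith [mul_nonneg (sub_nonneg.mpr hK) (Nat.cast_nonneg (ν m) : (0:ℝ) ≤ (ν m : ℝ))]
          have h3 : (0:ℝ) ≤ (1 + K * (ν m : ℝ)) ^ θ := Real.rpow_nonneg (le_of_lt hpos) _
          nlinarith
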